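/- The range of a completely symmetric state is contained in the cyclically invariant subspace: if ρ is a CS state on (ℂ^N)^{⊗d} and c : Fin d → Fin d is the cyclic permutation k ↦ k+1 (mod d), then every vector w in the column space of ρ satisfies w(I ∘ c) = w(I) for every index I : Fin d → Fin N (and hence w is invariant under all powers of c). -/

import Mathlib

open scoped ComplexOrder

/-- Completely symmetric matrix on `(ℂ^N)^{⊗d}`. -/
def IsCS {N d : ℕ} (ρ : Matrix (Fin d → Fin N) (Fin d → Fin N) ℂ) : Prop :=
  ∀ (π : Equiv.Perm (Fin d ⊕ Fin d)) (I J : Fin d → Fin N),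
    ρ (fun k => Sum.elim I J (π (Sum.inl k))) (fun k => Sum.elim I J (π (Sum.inr k))) = ρ I J

/-- The range of a CS state is contained in the cyclically invariant subspace, where
`finRotate d` is the cyclic permutation `k ↦ k + 1 (mod d)`. -/
theorem stmt_14 {N d : ℕ} (ρ : Matrix (Fin d → Fin N) (Fin d → Fin N) ℂ)
    (hpsd : ρ.PosSemidef) (htr : ρ.trace = 1) (hCS : IsCS ρ) :
    ∀ (u : (Fin d → Fin N) → ℂ) (I : Fin d → Fin N),
      ρ.mulVec u (I ∘ finRotate d) = ρ.mulVec u I := by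
  intro u I
  have h : ∀ J, ρ (I ∘ finRotate d) J = ρ I J := by
    intro J
    have := hCS (Equiv.sumCongr (finRotate d) (Equiv.refl _)) I J
    simpa [Function.comp_def] using this
  simp [Matrix.mulVec, dotProduct, h]
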